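/- If a set P of points in ℝ² has all pairwise distances integral and contains three non-collinear points, and k is the characteristic of one non-degenerate triangle in P (the squarefree part of 16·area²), then after a suitable isometry every point of P has coordinates of the form (q₁, q₂√k) with q₁, q₂ rational. -/

import Mathlib

/-- The area of the triangle on points `p q r` of the plane: half the absolute value of
the determinant of `(q - p, r - p)`. -/
noncomputable def triArea (p q r : EuclideanSpace ℝ (Fin 2)) : ℝ :=
  |(q 0 - p 0) * (r 1 - p 1) - (q 1 - p 1) * (r 0 - p 0)| / 2

lemma collinear_of_det (p q r : EuclideanSpace ℝ (Fin 2))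
    (h : (q 0 - p 0) * (r 1 - p 1) - (q 1 - p 1) * (r 0 - p 0) = 0) :
    Collinear ℝ ({p, q, r} : Set (EuclideanSpace ℝ (Fin 2))) := by
  rw [collinear_iff_of_mem (Set.mem_insert p _)]
  by_cases h0 : q 0 - p 0 = 0 ∧ q 1 - p 1 = 0
  · refine ⟨r - p, ?_⟩
    rintro x (rfl | rfl | rfl)
    · exact ⟨0, by simp⟩
    · refine ⟨0, ?_⟩
      ext i
      fin_cases i
      · simpa [vadd_eq_add, PiLp.smul_apply, PiLp.add_apply] using by linarith [h0.1]
      · simpa [vadd_eq_add, PiLp.smul_apply, PiLp.add_apply] using by linarith [h0.2]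
    · refine ⟨1, ?_⟩
      ext i
      fin_cases i <;>
        simp [vadd_eq_add, PiLp.smul_apply, PiLp.sub_apply, PiLp.add_apply]
      -- marker
  · refine ⟨q - p, ?_⟩
    rintro x (rfl | rfl | rfl)
    · exact ⟨0, by simp⟩
    · refine ⟨1, ?_⟩
      ext i
      fin_cases i <;>
        simp [vadd_eq_add, PiLp.smul_apply, PiLp.sub_apply, PiLp.add_apply]
    · by_cases h1 : q 0 - p 0 = 0
      · have h2 : q 1 - p 1 ≠ 0 := fun h2 => h0 ⟨h1, h2⟩
        refine ⟨(x 1 - p 1) / (q 1 - p 1), ?_⟩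
        ext i
        fin_cases i
        · simp only [vadd_eq_add, PiLp.add_apply, PiLp.smul_apply, PiLp.sub_apply,
            smul_eq_mul, Fin.isValue, Fin.mk_zero, Fin.mk_one]
          have hz : (q 1 - p 1) * (x 0 - p 0) = 0 := by linear_combination (x 1 - p 1) * h1 - h
          have h3 : x 0 - p 0 = 0 := by
            rcases mul_eq_zero.1 hz with h' | h'
            · exact absurd h' h2
            · exact h'
          rw [h1]
          linarith
        · simp only [vadd_eq_add, PiLp.add_apply, PiLp.smul_apply, PiLp.sub_apply,
            smul_eq_mul, Fin.isValue, Fin.mk_zero, Fin.mk_one]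
          field_simp
          ring
      · refine ⟨(x 0 - p 0) / (q 0 - p 0), ?_⟩
        ext i
        fin_cases i
        · simp only [vadd_eq_add, PiLp.add_apply, PiLp.smul_apply, PiLp.sub_apply,
            smul_eq_mul, Fin.isValue, Fin.mk_zero, Fin.mk_one]
          field_simp
          ring
        · simp only [vadd_eq_add, PiLp.add_apply, PiLp.smul_apply, PiLp.sub_apply,
            smul_eq_mul, Fin.isValue, Fin.mk_zero, Fin.mk_one]
          field_simp
          linear_combination h

private lemma dist_sq_eq (u v : EuclideanSpace ℝ (Fin 2)) :
    dist u v ^ 2 = (u 0 - v 0) ^ 2 + (u 1 - v 1) ^ 2 := by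
  rw [EuclideanSpace.dist_eq, Real.sq_sqrt (by positivity)]
  simp [Fin.sum_univ_two, Real.dist_eq, sq_abs]

noncomputable def rotFun (p : EuclideanSpace ℝ (Fin 2)) (c s : ℝ)
    (x : EuclideanSpace ℝ (Fin 2)) : EuclideanSpace ℝ (Fin 2) :=
  WithLp.toLp 2 ![c * (x 0 - p 0) + s * (x 1 - p 1), -s * (x 0 - p 0) + c * (x 1 - p 1)]

noncomputable def rotIso (p : EuclideanSpace ℝ (Fin 2)) (c s : ℝ) (h : c ^ 2 + s ^ 2 = 1) :
    EuclideanSpace ℝ (Fin 2) ≃ᵢ EuclideanSpace ℝ (Fin 2) where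
  toFun := rotFun p c s
  invFun y := WithLp.toLp 2 ![c * y 0 - s * y 1 + p 0, s * y 0 + c * y 1 + p 1]
  left_inv x := by
    unfold rotFun
    ext i
    fin_cases i <;>
      simp only [Matrix.cons_val_zero, Matrix.cons_val_one, Matrix.head_cons, Fin.mk_zero,
        Fin.mk_one, Fin.isValue, PiLp.toLp_apply]
    · linear_combination (x 0 - p 0) * h
    · linear_combination (x 1 - p 1) * h
  right_inv y := by
    unfold rotFun
    ext i
    fin_cases i <;>
      simp only [Matrix.cons_val_zero, Matrix.cons_val_one, Matrix.head_cons, Fin.mk_zero,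
        Fin.mk_one, Fin.isValue, PiLp.toLp_apply]
    · linear_combination (y 0) * h
    · linear_combination (y 1) * h
  isometry_toFun := Isometry.of_dist_eq fun x y => by
    show dist (rotFun p c s x) (rotFun p c s y) = dist x y
    rw [EuclideanSpace.dist_eq, EuclideanSpace.dist_eq]
    unfold rotFun
    congr 1
    rw [Fin.sum_univ_two, Fin.sum_univ_two]
    simp only [Real.dist_eq, sq_abs, Matrix.cons_val_zero, Matrix.cons_val_one,
      Matrix.head_cons, PiLp.toLp_apply]
    linear_combination ((x 0 - y 0) ^ 2 + (x 1 - y 1) ^ 2) * h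

lemma rotIso_apply₀ (p : EuclideanSpace ℝ (Fin 2)) (c s : ℝ) (h : c ^ 2 + s ^ 2 = 1)
    (x : EuclideanSpace ℝ (Fin 2)) :
    rotIso p c s h x 0 = c * (x 0 - p 0) + s * (x 1 - p 1) := rfl

lemma rotIso_apply₁ (p : EuclideanSpace ℝ (Fin 2)) (c s : ℝ) (h : c ^ 2 + s ^ 2 = 1)
    (x : EuclideanSpace ℝ (Fin 2)) :
    rotIso p c s h x 1 = -s * (x 0 - p 0) + c * (x 1 - p 1) := rfl


/-- If a plane point set has pairwise integral distances and contains a non-degenerate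
triangle of characteristic `k` (the squarefree part of `16·area²`), then after a
suitable isometry every point of the set has coordinates `(q₁, q₂·√k)` with
`q₁, q₂` rational. -/
theorem integral_point_set_coordinates
    (S : Set (EuclideanSpace ℝ (Fin 2)))
    (hint : ∀ p ∈ S, ∀ q ∈ S, ∃ n : ℕ, dist p q = n)
    (p q r : EuclideanSpace ℝ (Fin 2)) (hp : p ∈ S) (hq : q ∈ S) (hr : r ∈ S)
    (hncol : ¬ Collinear ℝ ({p, q, r} : Set (EuclideanSpace ℝ (Fin 2))))
    (k : ℕ) (hk : Squarefree k)
    (hchar : ∃ m : ℕ, 16 * triArea p q r ^ 2 = (k : ℝ) * (m : ℝ) ^ 2) :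
    ∃ f : EuclideanSpace ℝ (Fin 2) ≃ᵢ EuclideanSpace ℝ (Fin 2),
      ∀ x ∈ S, ∃ q₁ q₂ : ℚ,
        f x = (WithLp.toLp 2 ![(q₁ : ℝ), (q₂ : ℝ) * Real.sqrt k] : EuclideanSpace ℝ (Fin 2)) := by
  classical
  -- p ≠ q
  have hpq : p ≠ q := by
    rintro rfl
    apply hncol
    have : ({p, p, r} : Set (EuclideanSpace ℝ (Fin 2))) = {p, r} := by simp
    rw [this]
    exact collinear_pair ℝ p r
  obtain ⟨a, ha⟩ := hint p hp q hq
  have hA : (0 : ℝ) < (a : ℝ) := by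
    rw [← ha]; exact dist_pos.2 hpq
  have hAne : (a : ℝ) ≠ 0 := ne_of_gt hA
  have hane : (a : ℚ) ≠ 0 := by exact_mod_cast fun h => hAne (by exact_mod_cast h)
  set c : ℝ := (q 0 - p 0) / a with hc
  set s : ℝ := (q 1 - p 1) / a with hs
  have hsum : (q 0 - p 0) ^ 2 + (q 1 - p 1) ^ 2 = (a : ℝ) ^ 2 := by
    have := dist_sq_eq p q
    rw [ha] at this
    linarith [this]
  have hcs : c ^ 2 + s ^ 2 = 1 := by
    rw [hc, hs, div_pow, div_pow, ← add_div, div_eq_one_iff_eq (by positivity)]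
    linarith [hsum]
  set F := rotIso p c s hcs with hF
  have hFdist : ∀ u v : EuclideanSpace ℝ (Fin 2),
      (F u 0 - F v 0) ^ 2 + (F u 1 - F v 1) ^ 2 = dist u v ^ 2 := by
    intro u v
    rw [← dist_sq_eq, F.dist_eq]
  have hFp0 : F p 0 = 0 := by rw [hF, rotIso_apply₀]; ring
  have hFp1 : F p 1 = 0 := by rw [hF, rotIso_apply₁]; ring
  have hFq0 : F q 0 = (a : ℝ) := by
    rw [hF, rotIso_apply₀, hc, hs]
    field_simp
    linarith [hsum]
  have hFq1 : F q 1 = 0 := by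
    rw [hF, rotIso_apply₁, hc, hs]
    field_simp
    ring
  -- coordinates of the image of any point of S
  have key : ∀ x ∈ S, ∃ d0 d1 : ℕ, dist x p = d0 ∧ dist x q = d1 ∧
      (((d0 ^ 2 + a ^ 2 - d1 ^ 2) / (2 * a) : ℚ) : ℝ) = F x 0 ∧
      (F x 1) ^ 2 = (d0 : ℝ) ^ 2 - (F x 0) ^ 2 := by
    intro x hx
    obtain ⟨d0, hd0⟩ := hint x hx p hp
    obtain ⟨d1, hd1⟩ := hint x hx q hq
    have e0 : (F x 0) ^ 2 + (F x 1) ^ 2 = (d0 : ℝ) ^ 2 := by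
      have := hFdist x p
      rw [hd0, hFp0, hFp1] at this
      linarith [this]
    have e1 : (F x 0 - a) ^ 2 + (F x 1) ^ 2 = (d1 : ℝ) ^ 2 := by
      have := hFdist x q
      rw [hd1, hFq0, hFq1] at this
      linarith [this]
    refine ⟨d0, d1, hd0, hd1, ?_, by linarith [e0]⟩
    push_cast
    rw [div_eq_iff (by positivity)]
    linear_combination e1 - e0
  obtain ⟨e0, e1, he0, he1, hR0, hR1sq⟩ := key r hr
  set R0 : ℝ := F r 0 with hR0def
  set R1 : ℝ := F r 1 with hR1def
  -- determinant relation
  have hdet : (q 0 - p 0) * (r 1 - p 1) - (q 1 - p 1) * (r 0 - p 0) = (a : ℝ) * R1 := by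
    rw [hR1def, hF, rotIso_apply₁, hc, hs]
    field_simp
    ring
  have hR1ne : R1 ≠ 0 := by
    intro h0
    apply hncol
    apply collinear_of_det
    rw [hdet, h0, mul_zero]
  obtain ⟨m, hm⟩ := hchar
  have harea : triArea p q r = |(a : ℝ) * R1| / 2 := by
    rw [triArea, hdet]
  have hmain : 4 * ((a : ℝ) * R1) ^ 2 = (k : ℝ) * (m : ℝ) ^ 2 := by
    rw [harea] at hm
    rw [div_pow, sq_abs] at hm
    linarith [hm]
  have hkne : (k : ℝ) ≠ 0 := by
    exact_mod_cast hk.ne_zero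
  have hkpos : (0 : ℝ) < (k : ℝ) := lt_of_le_of_ne (Nat.cast_nonneg k) (Ne.symm hkne)
  have hmne : (m : ℝ) ≠ 0 := by
    intro h0
    rw [h0] at hmain
    norm_num at hmain
    rcases hmain with h | h
    · exact hAne (by exact_mod_cast h)
    · exact hR1ne h
  have hmpos : (0 : ℝ) < (m : ℝ) :=
    lt_of_le_of_ne (Nat.cast_nonneg m) (Ne.symm hmne)
  have hsqrtk : Real.sqrt k ^ 2 = (k : ℝ) := Real.sq_sqrt (Nat.cast_nonneg k)
  have hsqrtkpos : 0 < Real.sqrt k := Real.sqrt_pos.2 hkpos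
  have hR1sq' : R1 ^ 2 = (k : ℝ) * ((m : ℝ) / (2 * a)) ^ 2 := by
    field_simp
    linear_combination hmain
  have habs : |R1| = Real.sqrt k * ((m : ℝ) / (2 * a)) := by
    rw [← Real.sqrt_sq_eq_abs, hR1sq', Real.sqrt_mul (Nat.cast_nonneg k),
      Real.sqrt_sq (by positivity)]
  set τ : ℚ := if 0 ≤ R1 then ((m : ℚ) / (2 * a)) else -((m : ℚ) / (2 * a)) with hτdef
  have hτ : (τ : ℝ) * Real.sqrt k = R1 := by
    rw [hτdef]
    by_cases hsgn : 0 ≤ R1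
    · rw [if_pos hsgn]
      push_cast
      rw [mul_comm, ← habs, abs_of_nonneg hsgn]
    · rw [if_neg hsgn]
      push_cast
      have : |R1| = -R1 := abs_of_neg (lt_of_not_ge hsgn)
      rw [mul_comm] at habs
      linarith [habs, this]
  have hτne : (τ : ℝ) ≠ 0 := by
    intro h0
    rw [h0, zero_mul] at hτ
    exact hR1ne hτ.symm
  have hτQne : τ ≠ 0 := fun h0 => hτne (by rw [h0]; norm_cast)
  refine ⟨F, ?_⟩
  intro x hx
  obtain ⟨d0, d1, hd0, hd1, hX0, hX1sq⟩ := key x hx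
  obtain ⟨n, hn⟩ := hint x hx r hr
  set X0 : ℝ := F x 0 with hX0def
  set X1 : ℝ := F x 1 with hX1def
  -- X1 * R1 is rational
  set q₁ : ℚ := (d0 ^ 2 + a ^ 2 - d1 ^ 2) / (2 * a) with hq₁def
  set ρ : ℚ := (e0 ^ 2 + a ^ 2 - e1 ^ 2) / (2 * a) with hρdef
  have hdistxr : (X0 - R0) ^ 2 + (X1 - R1) ^ 2 = (n : ℝ) ^ 2 := by
    have := hFdist x r
    rw [hn] at this
    linarith [this]
  set cval : ℚ := ((d0 : ℚ) ^ 2 + (e0 : ℚ) ^ 2 - (n : ℚ) ^ 2) / 2 - q₁ * ρ with hcvaldef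
  have hXR : X1 * R1 = (cval : ℝ) := by
    have hR1sq'' : R1 ^ 2 = (e0 : ℝ) ^ 2 - R0 ^ 2 := hR1sq
    rw [hcvaldef]
    push_cast
    rw [hX0, hR0]
    linear_combination (1/2 : ℝ) * hX1sq + (1/2 : ℝ) * hR1sq'' - (1/2 : ℝ) * hdistxr
  set q₂ : ℚ := cval / (τ * k) with hq₂def
  have hX1 : X1 = (q₂ : ℝ) * Real.sqrt k := by
    have hkQne : (k : ℚ) ≠ 0 := by exact_mod_cast hk.ne_zero
    have h1 : (q₂ : ℝ) * Real.sqrt k * R1 = (cval : ℝ) := by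
      rw [← hτ, hq₂def]
      push_cast
      have hcτ : (cval : ℝ) / ((τ : ℝ) * (k : ℝ)) * ((τ : ℝ) * (k : ℝ)) = cval :=
        div_mul_cancel₀ _ (mul_ne_zero hτne hkne)
      linear_combination ((cval : ℝ) / ((τ : ℝ) * (k : ℝ)) * (τ : ℝ)) * hsqrtk + hcτ
    have := hXR.trans h1.symm
    exact mul_right_cancel₀ hR1ne this
  refine ⟨q₁, q₂, ?_⟩
  ext i
  fin_cases i
  · simp only [Fin.mk_zero, Fin.isValue, Matrix.cons_val_zero, PiLp.toLp_apply]
    rw [← hX0def, ← hX0]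
  · simp only [Fin.mk_one, Fin.isValue, Matrix.cons_val_one, Matrix.head_cons, PiLp.toLp_apply]
    rw [← hX1def, hX1]
    rfl
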